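/- Let Y be an exponential random variable and for each n let X^{(n)} = ∑_{i=1}^n (Y_i/√(log(i+1)))·e_i ∈ ℝ^n where Y₁,...,Y_n are independent copies of Y. Then there exists a constant c₄ > 0 (independent of n) such that with probability at least c₄, sup_{t ∈ B₁^n} ⟨t, X^{(n)}⟩ ≥ √(log(n+1)), where B₁^n is the unit ball of ℓ₁^n. -/

import Mathlib

open MeasureTheory ProbabilityTheory Real

lemma expMeasure_singleton (a : ℝ) : ProbabilityTheory.expMeasure 1 {a} = 0 := by
  rw [expMeasure, gammaMeasure]
  exact withDensity_absolutelyContinuous _ _ (measure_singleton a)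

lemma expMeasure_Iio (a : ℝ) (ha : 0 ≤ a) :
    ProbabilityTheory.expMeasure 1 (Set.Iio a) = ENNReal.ofReal (1 - Real.exp (-a)) := by
  have hprob : IsProbabilityMeasure (expMeasure 1) := isProbabilityMeasure_expMeasure one_pos
  have h1 : expMeasure 1 (Set.Iic a) = expMeasure 1 (Set.Iio a) + expMeasure 1 {a} := by
    rw [← measure_union (by simp) (measurableSet_singleton a)]
    congr 1
    ext x
    simp [le_iff_lt_or_eq]
  rw [expMeasure_singleton, add_zero] at h1
  rw [← h1, ← ofReal_cdf (μ := expMeasure 1) a]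
  have : cdf (expMeasure 1) a = if 0 ≤ a then 1 - exp (-(1 * a)) else 0 := cdf_expMeasure_eq one_pos a
  rw [this, if_pos ha, one_mul]

/-- For `X^{(n)} = ∑ᵢ Yᵢ/√(log(i+1)) eᵢ` with `Yᵢ` i.i.d. standard exponential,
there is `c₄ > 0` independent of `n` such that with probability at least `c₄`,
`sup_{t ∈ B₁^n} ⟨t, X^{(n)}⟩ ≥ √(log(n+1))`. -/
theorem exponential_sup_lower :
    ∃ c₄ : ℝ, 0 < c₄ ∧
      ∀ n : ℕ, 1 ≤ n →
        c₄ ≤ ((Measure.pi fun _ : Fin n => ProbabilityTheory.expMeasure 1)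
          {y : Fin n → ℝ |
            Real.sqrt (Real.log (n + 1)) ≤
              ⨆ t : {t : Fin n → ℝ // ∑ i, |t i| ≤ 1},
                ∑ i, t.1 i * (y i / Real.sqrt (Real.log ((i : ℕ) + 1 + 1)))}).toReal := by
  haveI : IsProbabilityMeasure (expMeasure 1) := isProbabilityMeasure_expMeasure one_pos
  refine ⟨1 - Real.exp (-(1/2 : ℝ)), by
    have := Real.exp_lt_one_iff.mpr (show -(1/2 : ℝ) < 0 by norm_num); linarith, ?_⟩
  intro n hn
  set μ := Measure.pi fun _ : Fin n => ProbabilityTheory.expMeasure 1 with hμ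
  haveI : IsProbabilityMeasure μ := by exact MeasureTheory.Measure.pi.instIsProbabilityMeasure _
  -- thresholds
  set a : Fin n → ℝ := fun i =>
    Real.sqrt (Real.log ((i : ℕ) + 1 + 1)) * Real.sqrt (Real.log (n + 1)) with ha_def
  have hlogn : (0:ℝ) ≤ Real.log (n + 1) := by
    apply Real.log_nonneg
    have : (1:ℝ) ≤ (n:ℝ) := by exact_mod_cast hn
    linarith
  have ha_nonneg : ∀ i, 0 ≤ a i := fun i =>
    mul_nonneg (Real.sqrt_nonneg _) (Real.sqrt_nonneg _)
  -- the "bad" box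
  set S : Set (Fin n → ℝ) := Set.pi Set.univ fun i => Set.Iio (a i) with hS_def
  have hS_meas : MeasurableSet S :=
    MeasurableSet.univ_pi fun i => measurableSet_Iio
  -- inclusion: complement of S is inside the target set
  have hsub : Sᶜ ⊆ {y : Fin n → ℝ |
      Real.sqrt (Real.log (n + 1)) ≤
        ⨆ t : {t : Fin n → ℝ // ∑ i, |t i| ≤ 1},
          ∑ i, t.1 i * (y i / Real.sqrt (Real.log ((i : ℕ) + 1 + 1)))} := by
    intro y hy
    simp only [hS_def, Set.mem_compl_iff, Set.mem_pi, Set.mem_univ, Set.mem_Iio, true_implies,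
      not_forall, not_lt] at hy
    obtain ⟨i, hi⟩ := hy
    -- the candidate t : indicator of coordinate i
    have ht : ∑ j, |(Pi.single i (1:ℝ) : Fin n → ℝ) j| ≤ 1 := by
      rw [Finset.sum_eq_single i]
      · simp
      · intro j _ hji; simp [Pi.single_apply, hji]
      · simp
    set t₀ : {t : Fin n → ℝ // ∑ i, |t i| ≤ 1} := ⟨Pi.single i 1, ht⟩ with ht₀
    -- boundedness of the sup family
    have hbdd : BddAbove (Set.range fun t : {t : Fin n → ℝ // ∑ i, |t i| ≤ 1} =>
        ∑ j, t.1 j * (y j / Real.sqrt (Real.log ((j : ℕ) + 1 + 1)))) := by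
      refine ⟨∑ j, |y j / Real.sqrt (Real.log ((j : ℕ) + 1 + 1))|, ?_⟩
      rintro x ⟨t, rfl⟩
      calc ∑ j, t.1 j * (y j / Real.sqrt (Real.log ((j : ℕ) + 1 + 1)))
          ≤ ∑ j, |t.1 j * (y j / Real.sqrt (Real.log ((j : ℕ) + 1 + 1)))| :=
            Finset.sum_le_sum fun j _ => le_abs_self _
        _ ≤ ∑ j, |y j / Real.sqrt (Real.log ((j : ℕ) + 1 + 1))| := by
            refine Finset.sum_le_sum fun j _ => ?_
            rw [abs_mul]
            have h1 : |t.1 j| ≤ 1 := by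
              refine le_trans ?_ t.2
              exact Finset.single_le_sum (fun k _ => abs_nonneg (t.1 k)) (Finset.mem_univ j)
            exact mul_le_of_le_one_left (abs_nonneg _) h1
    have hlogi : (0:ℝ) < Real.sqrt (Real.log ((i : ℕ) + 1 + 1)) := by
      apply Real.sqrt_pos.mpr
      apply Real.log_pos
      have : (0:ℝ) ≤ (i : ℕ) := Nat.cast_nonneg _
      linarith
    have hval : Real.sqrt (Real.log (n + 1)) ≤
        ∑ j, t₀.1 j * (y j / Real.sqrt (Real.log ((j : ℕ) + 1 + 1))) := by
      have hsum : ∑ j, t₀.1 j * (y j / Real.sqrt (Real.log ((j : ℕ) + 1 + 1)))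
          = y i / Real.sqrt (Real.log ((i : ℕ) + 1 + 1)) := by
        rw [Finset.sum_eq_single i]
        · simp [ht₀]
        · intro j _ hji; simp [ht₀, Pi.single_apply, hji]
        · simp
      rw [hsum, le_div_iff₀ hlogi]
      calc Real.sqrt (Real.log (n + 1)) * Real.sqrt (Real.log ((i : ℕ) + 1 + 1))
          = a i := by rw [ha_def]; ring
        _ ≤ y i := hi
    exact le_ciSup_of_le hbdd t₀ hval
  -- measure computation
  have hprod : (μ S).toReal = ∏ i, (1 - Real.exp (-(a i))) := by
    rw [hμ, hS_def, Measure.pi_pi]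
    rw [ENNReal.toReal_prod]
    congr 1
    ext i
    rw [expMeasure_Iio (a i) (ha_nonneg i), ENNReal.toReal_ofReal]
    have := Real.exp_le_one_iff.mpr (neg_nonpos.mpr (ha_nonneg i))
    linarith
  have hfactor : ∀ i : Fin n, 1 - Real.exp (-(a i)) ≤ 1 - 1/(n+1 : ℝ) := by
    intro i
    have hai : a i ≤ Real.log (n + 1) := by
      have h1 : Real.sqrt (Real.log ((i : ℕ) + 1 + 1)) ≤ Real.sqrt (Real.log (n + 1)) := by
        apply Real.sqrt_le_sqrt
        apply Real.log_le_log (by positivity)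
        have : (i : ℕ) + 1 ≤ n := i.2
        have : ((i : ℕ) : ℝ) + 1 ≤ (n : ℝ) := by exact_mod_cast this
        linarith
      calc a i ≤ Real.sqrt (Real.log (n + 1)) * Real.sqrt (Real.log (n + 1)) :=
            mul_le_mul_of_nonneg_right h1 (Real.sqrt_nonneg _)
        _ = Real.log (n + 1) := Real.mul_self_sqrt hlogn
    have : Real.exp (-(Real.log (n+1))) ≤ Real.exp (-(a i)) :=
      Real.exp_le_exp.mpr (by linarith)
    have hexp : Real.exp (-(Real.log (n+1))) = 1/(n+1 : ℝ) := by
      rw [Real.exp_neg, Real.exp_log (by positivity)]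
      ring
    linarith [hexp ▸ this]
  have hpow : ∏ i : Fin n, (1 - Real.exp (-(a i))) ≤ Real.exp (-(1/2 : ℝ)) := by
    have hnn : ∀ i : Fin n, 0 ≤ 1 - Real.exp (-(a i)) := fun i => by
      have := Real.exp_le_one_iff.mpr (neg_nonpos.mpr (ha_nonneg i)); linarith
    have h1 : ∏ i : Fin n, (1 - Real.exp (-(a i))) ≤ ∏ _i : Fin n, (1 - 1/(n+1 : ℝ)) :=
      Finset.prod_le_prod (fun i _ => hnn i) (fun i _ => hfactor i)
    have h2 : ∏ _i : Fin n, (1 - 1/(n+1 : ℝ)) = (1 - 1/(n+1 : ℝ))^n := by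
      rw [Finset.prod_const, Finset.card_univ, Fintype.card_fin]
    have h3 : (1 - 1/(n+1 : ℝ)) ≤ Real.exp (-(1/(n+1 : ℝ))) := by
      have := Real.add_one_le_exp (-(1/(n+1 : ℝ)))
      linarith
    have h4 : (1 - 1/(n+1 : ℝ))^n ≤ (Real.exp (-(1/(n+1 : ℝ))))^n := by
      apply pow_le_pow_left₀ _ h3
      have : 1/(n+1:ℝ) ≤ 1 := by
        rw [div_le_one (by positivity)]
        have : (0:ℝ) ≤ (n:ℝ) := Nat.cast_nonneg _
        linarith
      linarith
    have h5 : (Real.exp (-(1/(n+1 : ℝ))))^n = Real.exp (-(n/(n+1 : ℝ))) := by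
      rw [← Real.exp_nat_mul]
      congr 1
      field_simp
    have h6 : Real.exp (-((n:ℝ)/(n+1 : ℝ))) ≤ Real.exp (-(1/2 : ℝ)) := by
      apply Real.exp_le_exp.mpr
      have hn1 : (1:ℝ) ≤ (n:ℝ) := by exact_mod_cast hn
      rw [neg_le_neg_iff, le_div_iff₀ (by positivity)]
      linarith
    calc ∏ i : Fin n, (1 - Real.exp (-(a i))) ≤ (1 - 1/(n+1 : ℝ))^n := by rw [← h2]; exact h1
      _ ≤ (Real.exp (-(1/(n+1 : ℝ))))^n := h4
      _ = Real.exp (-((n:ℝ)/(n+1 : ℝ))) := h5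
      _ ≤ Real.exp (-(1/2 : ℝ)) := h6
  -- put it together
  have hcompl : (μ Sᶜ).toReal = 1 - (μ S).toReal := by
    rw [measure_compl hS_meas (measure_ne_top μ S), measure_univ,
      ENNReal.toReal_sub_of_le prob_le_one ENNReal.one_ne_top, ENNReal.toReal_one]
  have hmono : μ Sᶜ ≤ μ _ := measure_mono hsub
  have hmono' : (μ Sᶜ).toReal ≤ (μ {y : Fin n → ℝ |
      Real.sqrt (Real.log (n + 1)) ≤
        ⨆ t : {t : Fin n → ℝ // ∑ i, |t i| ≤ 1},
          ∑ i, t.1 i * (y i / Real.sqrt (Real.log ((i : ℕ) + 1 + 1)))}).toReal :=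
    ENNReal.toReal_mono (measure_ne_top μ _) hmono
  have : 1 - Real.exp (-(1/2 : ℝ)) ≤ (μ Sᶜ).toReal := by
    rw [hcompl, hprod]
    linarith
  linarith
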